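/- (Example 2, m = 3) Let n be a positive integer, let A be an invertible n×n real matrix, let D be an n×n real matrix, and let b ∈ ℝⁿ with ‖b‖ = 1. For real ε and α ∈ {1, 2, 3} define x̂_α(ε) := (1/2)((A + (α·ε) • D)⁻¹ b + (A − (α·ε) • D)⁻¹ b). Then there exist constants C > 0 and ε₀ > 0 such that for every real ε with 0 < |ε| < ε₀, all the matrices A ± (α·ε) • D (α = 1, 2, 3) are invertible and the combination x̂* := (3/2) x̂₁(ε) − (3/5) x̂₂(ε) + (1/10) x̂₃(ε), whose coefficients are the unique solution β of Γ₃ᵀ β = (1,0,0)ᵀ with Γ₃ the 3×3 matrix with entries (Γ₃)_{α,j} = α^{2j}, satisfies ‖A⁻¹ b − x̂*‖ ≤ C · ε⁶. -/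

import Mathlib

open Matrix
open scoped Matrix.Norms.L2Operator

/-- Matrix-vector product, with the vector living in Euclidean space (so that vector
norms are the Euclidean ones). -/
noncomputable def mulVecE {n : ℕ} (M : Matrix (Fin n) (Fin n) ℝ)
    (v : EuclideanSpace ℝ (Fin n)) : EuclideanSpace ℝ (Fin n) :=
  (WithLp.equiv 2 (Fin n → ℝ)).symm (M.mulVec ((WithLp.equiv 2 (Fin n → ℝ)) v))

/-- The averaged perturbation solution
`x̂_α(ε) = (1/2)((A + (α ε) • D)⁻¹ b + (A - (α ε) • D)⁻¹ b)`. -/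
noncomputable def xhat {n : ℕ} (A D : Matrix (Fin n) (Fin n) ℝ)
    (b : EuclideanSpace ℝ (Fin n)) (ε α : ℝ) : EuclideanSpace ℝ (Fin n) :=
  (1 / 2 : ℝ) • (mulVecE (A + (α * ε) • D)⁻¹ b + mulVecE (A - (α * ε) • D)⁻¹ b)

namespace MThreeAux

variable {n : ℕ}

lemma norm_one_le (n : ℕ) : ‖(1 : Matrix (Fin n) (Fin n) ℝ)‖ ≤ 1 := by
  rw [Matrix.cstar_norm_def, _root_.map_one]
  exact ContinuousLinearMap.norm_id_le

lemma factor (A D : Matrix (Fin n) (Fin n) ℝ) (hA : IsUnit A) (t : ℝ) :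
    A + t • D = A * (1 + t • (A⁻¹ * D)) := by
  rw [Matrix.mul_add, Matrix.mul_one, Matrix.mul_smul, ← Matrix.mul_assoc,
    Matrix.mul_nonsing_inv A ((Matrix.isUnit_iff_isUnit_det A).mp hA), Matrix.one_mul]

lemma isUnit_perturb (A D : Matrix (Fin n) (Fin n) ℝ) (hA : IsUnit A) (t : ℝ)
    (ht : ‖t • (A⁻¹ * D)‖ < 1) : IsUnit (A + t • D) := by
  rw [factor A D hA t]
  refine hA.mul ?_
  rw [show (1 : Matrix (Fin n) (Fin n) ℝ) + t • (A⁻¹ * D)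
      = 1 - -(t • (A⁻¹ * D)) from (sub_neg_eq_add _ _).symm]
  exact isUnit_one_sub_of_norm_lt_one (by rwa [norm_neg])

lemma inv_bound (A D : Matrix (Fin n) (Fin n) ℝ) (hA : IsUnit A) (t : ℝ)
    (ht : ‖t • (A⁻¹ * D)‖ ≤ 1 / 2) : ‖(A + t • D)⁻¹‖ ≤ 2 * ‖A⁻¹‖ := by
  set B := A⁻¹ * D with hB
  have hlt : ‖t • B‖ < 1 := lt_of_le_of_lt ht (by norm_num)
  have hU1 : IsUnit ((1 : Matrix (Fin n) (Fin n) ℝ) + t • B) := by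
    rw [show (1 : Matrix (Fin n) (Fin n) ℝ) + t • B = 1 - -(t • B) from (sub_neg_eq_add _ _).symm]
    exact isUnit_one_sub_of_norm_lt_one (by rwa [norm_neg])
  set S := ((1 : Matrix (Fin n) (Fin n) ℝ) + t • B)⁻¹ with hSdef
  have hS : ((1 : Matrix (Fin n) (Fin n) ℝ) + t • B) * S = 1 :=
    Matrix.mul_nonsing_inv _ ((Matrix.isUnit_iff_isUnit_det _).mp hU1)
  have hSid : S = 1 - (t • B) * S := by
    rw [Matrix.add_mul, Matrix.one_mul] at hS
    exact (eq_sub_of_add_eq' hS).symm ▸ (by rw [← hS]; abel)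
  have hnS : ‖S‖ ≤ 2 := by
    have h1 : ‖S‖ ≤ ‖(1 : Matrix (Fin n) (Fin n) ℝ)‖ + ‖(t • B) * S‖ := by
      calc ‖S‖ = ‖1 - (t • B) * S‖ := by rw [← hSid]
        _ ≤ _ := norm_sub_le _ _
    have h2 : ‖(t • B) * S‖ ≤ ‖t • B‖ * ‖S‖ := Matrix.l2_opNorm_mul _ _
    have h3 : ‖t • B‖ * ‖S‖ ≤ (1 / 2) * ‖S‖ :=
      mul_le_mul_of_nonneg_right ht (norm_nonneg _)
    have h4 := norm_one_le n
    linarith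
  rw [factor A D hA t, Matrix.mul_inv_rev]
  calc ‖S * A⁻¹‖ ≤ ‖S‖ * ‖A⁻¹‖ := Matrix.l2_opNorm_mul _ _
    _ ≤ 2 * ‖A⁻¹‖ := mul_le_mul_of_nonneg_right hnS (norm_nonneg _)

lemma expand (A D : Matrix (Fin n) (Fin n) ℝ) (hA : IsUnit A) (t : ℝ)
    (hU : IsUnit (A + t • D)) :
    (A + t • D)⁻¹
      = A⁻¹ - t • ((A⁻¹ * D) * A⁻¹) + t ^ 2 • ((A⁻¹ * D) ^ 2 * A⁻¹)
        - t ^ 3 • ((A⁻¹ * D) ^ 3 * A⁻¹) + t ^ 4 • ((A⁻¹ * D) ^ 4 * A⁻¹)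
        - t ^ 5 • ((A⁻¹ * D) ^ 5 * A⁻¹)
        + t ^ 6 • ((A⁻¹ * D) ^ 6 * (A + t • D)⁻¹) := by
  set B := A⁻¹ * D with hB
  have hdet := (Matrix.isUnit_iff_isUnit_det A).mp hA
  have hdet' := (Matrix.isUnit_iff_isUnit_det _).mp hU
  apply Matrix.inv_eq_left_inv
  have hAinv : A⁻¹ * (A + t • D) = 1 + t • B := by
    rw [Matrix.mul_add, Matrix.nonsing_inv_mul A hdet, Matrix.mul_smul]
  have hS : (A + t • D)⁻¹ * (A + t • D) = 1 := Matrix.nonsing_inv_mul _ hdet'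
  have p2 : B * B = B ^ 2 := (sq B).symm
  have p3 : B ^ 2 * B = B ^ 3 := (pow_succ B 2).symm
  have p4 : B ^ 3 * B = B ^ 4 := (pow_succ B 3).symm
  have p5 : B ^ 4 * B = B ^ 5 := (pow_succ B 4).symm
  have p6 : B ^ 5 * B = B ^ 6 := (pow_succ B 5).symm
  simp only [Matrix.add_mul, Matrix.sub_mul, Matrix.smul_mul, Matrix.mul_assoc]
  simp only [hAinv, hS]
  simp only [Matrix.mul_add, Matrix.mul_one, Matrix.mul_smul, p2, p3, p4, p5, p6]
  module

lemma combo (Ainv B : Matrix (Fin n) (Fin n) ℝ) (ε : ℝ)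
    (S1p S1m S2p S2m S3p S3m : Matrix (Fin n) (Fin n) ℝ)
    (h1p : S1p = Ainv - (1*ε) • (B*Ainv) + (1*ε)^2 • (B^2*Ainv) - (1*ε)^3 • (B^3*Ainv)
        + (1*ε)^4 • (B^4*Ainv) - (1*ε)^5 • (B^5*Ainv) + (1*ε)^6 • (B^6*S1p))
    (h1m : S1m = Ainv - (-(1*ε)) • (B*Ainv) + (-(1*ε))^2 • (B^2*Ainv) - (-(1*ε))^3 • (B^3*Ainv)
        + (-(1*ε))^4 • (B^4*Ainv) - (-(1*ε))^5 • (B^5*Ainv) + (-(1*ε))^6 • (B^6*S1m))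
    (h2p : S2p = Ainv - (2*ε) • (B*Ainv) + (2*ε)^2 • (B^2*Ainv) - (2*ε)^3 • (B^3*Ainv)
        + (2*ε)^4 • (B^4*Ainv) - (2*ε)^5 • (B^5*Ainv) + (2*ε)^6 • (B^6*S2p))
    (h2m : S2m = Ainv - (-(2*ε)) • (B*Ainv) + (-(2*ε))^2 • (B^2*Ainv) - (-(2*ε))^3 • (B^3*Ainv)
        + (-(2*ε))^4 • (B^4*Ainv) - (-(2*ε))^5 • (B^5*Ainv) + (-(2*ε))^6 • (B^6*S2m))
    (h3p : S3p = Ainv - (3*ε) • (B*Ainv) + (3*ε)^2 • (B^2*Ainv) - (3*ε)^3 • (B^3*Ainv)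
        + (3*ε)^4 • (B^4*Ainv) - (3*ε)^5 • (B^5*Ainv) + (3*ε)^6 • (B^6*S3p))
    (h3m : S3m = Ainv - (-(3*ε)) • (B*Ainv) + (-(3*ε))^2 • (B^2*Ainv) - (-(3*ε))^3 • (B^3*Ainv)
        + (-(3*ε))^4 • (B^4*Ainv) - (-(3*ε))^5 • (B^5*Ainv) + (-(3*ε))^6 • (B^6*S3m)) :
    Ainv - ((3/2:ℝ) • ((1/2:ℝ) • (S1p + S1m)) - (3/5:ℝ) • ((1/2:ℝ) • (S2p + S2m))
        + (1/10:ℝ) • ((1/2:ℝ) • (S3p + S3m)))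
      = (-(3/4)*ε^6) • (B^6*S1p) + (-(3/4)*ε^6) • (B^6*S1m)
        + ((96/5)*ε^6) • (B^6*S2p) + ((96/5)*ε^6) • (B^6*S2m)
        + (-(729/20)*ε^6) • (B^6*S3p) + (-(729/20)*ε^6) • (B^6*S3m) := by
  conv_lhs => rw [h1p, h1m, h2p, h2m, h3p, h3m]
  module

lemma mulVecE_add (M N : Matrix (Fin n) (Fin n) ℝ) (v : EuclideanSpace ℝ (Fin n)) :
    mulVecE (M + N) v = mulVecE M v + mulVecE N v :=
  congrArg (WithLp.equiv 2 (Fin n → ℝ)).symm (Matrix.add_mulVec _ _ _)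

lemma mulVecE_sub (M N : Matrix (Fin n) (Fin n) ℝ) (v : EuclideanSpace ℝ (Fin n)) :
    mulVecE (M - N) v = mulVecE M v - mulVecE N v :=
  congrArg (WithLp.equiv 2 (Fin n → ℝ)).symm (Matrix.sub_mulVec _ _ _)

lemma mulVecE_smul (c : ℝ) (M : Matrix (Fin n) (Fin n) ℝ) (v : EuclideanSpace ℝ (Fin n)) :
    mulVecE (c • M) v = c • mulVecE M v :=
  congrArg (WithLp.equiv 2 (Fin n → ℝ)).symm (Matrix.smul_mulVec _ _ _)

lemma norm_mulVecE_le (M : Matrix (Fin n) (Fin n) ℝ) (v : EuclideanSpace ℝ (Fin n)) :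
    ‖mulVecE M v‖ ≤ ‖M‖ * ‖v‖ :=
  M.l2_opNorm_mulVec v

lemma norm_add₆_le {E : Type*} [SeminormedAddCommGroup E] (a b c d e f : E) :
    ‖a + b + c + d + e + f‖ ≤ ‖a‖ + ‖b‖ + ‖c‖ + ‖d‖ + ‖e‖ + ‖f‖ := by
  have h1 := norm_add_le (a + b + c + d + e) f
  have h2 := norm_add_le (a + b + c + d) e
  have h3 := norm_add_le (a + b + c) d
  have h4 := norm_add_le (a + b) c
  have h5 := norm_add_le a b
  linarith

end MThreeAux

set_option maxHeartbeats 2000000 in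
/-- Example 2 (`m = 3`): the coefficients `(3/2, -3/5, 1/10)` solve `Γ₃ᵀ β = e₁`, and
there exist `C > 0`, `ε₀ > 0` such that for all `ε` with `0 < |ε| < ε₀` the matrices
`A ± (α ε) • D` (`α = 1, 2, 3`) are invertible and
`x̂* = (3/2) x̂₁(ε) - (3/5) x̂₂(ε) + (1/10) x̂₃(ε)` satisfies `‖A⁻¹ b - x̂*‖ ≤ C ε⁶`. -/
theorem m_three_combination_error (n : ℕ) (hn : 0 < n)
    (A D : Matrix (Fin n) (Fin n) ℝ) (hA : IsUnit A)
    (b : EuclideanSpace ℝ (Fin n)) (hb : ‖b‖ = 1) :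
    (Matrix.of fun α j : Fin 3 => (((α : ℕ) + 1 : ℝ)) ^ (2 * (j : ℕ)))ᵀ.mulVec
        ![3 / 2, -3 / 5, 1 / 10] = ![1, 0, 0] ∧
      ∃ C > (0 : ℝ), ∃ ε₀ > (0 : ℝ), ∀ ε : ℝ, 0 < |ε| → |ε| < ε₀ →
        (∀ α : Fin 3, IsUnit (A + ((((α : ℕ) + 1 : ℝ)) * ε) • D)
            ∧ IsUnit (A - ((((α : ℕ) + 1 : ℝ)) * ε) • D)) ∧
        ‖mulVecE A⁻¹ b
            - ((3 / 2 : ℝ) • xhat A D b ε 1 - (3 / 5 : ℝ) • xhat A D b ε 2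
                + (1 / 10 : ℝ) • xhat A D b ε 3)‖
          ≤ C * ε ^ 6 := by
  open MThreeAux in
  constructor
  · funext i
    fin_cases i <;>
      · simp [Matrix.mulVec, dotProduct, Fin.sum_univ_three]
        norm_num
  set B := A⁻¹ * D with hBdef
  have hK0 : (0:ℝ) ≤ ‖B ^ 6‖ * (2 * ‖A⁻¹‖) := by positivity
  refine ⟨113 * (‖B ^ 6‖ * (2 * ‖A⁻¹‖)) + 1, by linarith, 1 / (8 * (‖B‖ + 1)),
    by positivity, ?_⟩
  intro ε hε hε0
  have hB1 : (0:ℝ) < ‖B‖ + 1 := by positivity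
  have h2' : |ε| * (8 * (‖B‖ + 1)) < 1 := (lt_div_iff₀ (by positivity)).mp hε0
  have hBnorm : ∀ t : ℝ, |t| ≤ 3 * |ε| → ‖t • B‖ ≤ 1 / 2 := by
    intro t ht
    rw [norm_smul, Real.norm_eq_abs]
    nlinarith [mul_le_mul_of_nonneg_right ht (norm_nonneg B),
      mul_nonneg (abs_nonneg ε) (norm_nonneg B), abs_nonneg ε, norm_nonneg B]
  have hUnit : ∀ t : ℝ, |t| ≤ 3 * |ε| → IsUnit (A + t • D) := fun t ht =>
    isUnit_perturb A D hA t (lt_of_le_of_lt (hBnorm t ht) (by norm_num))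
  have hInvB : ∀ t : ℝ, |t| ≤ 3 * |ε| → ‖(A + t • D)⁻¹‖ ≤ 2 * ‖A⁻¹‖ := fun t ht =>
    inv_bound A D hA t (hBnorm t ht)
  have hsub : ∀ t : ℝ, A + (-t) • D = A - t • D := fun t => by
    rw [neg_smul, ← sub_eq_add_neg]
  constructor
  · intro α
    have hα : ((α : ℕ) + 1 : ℝ) ≤ 3 := by
      have h := Nat.lt_succ_iff.mp α.is_lt
      have : ((α : ℕ) : ℝ) ≤ 2 := by exact_mod_cast h
      linarith
    have habs : |(((α : ℕ) + 1 : ℝ)) * ε| ≤ 3 * |ε| := by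
      rw [abs_mul, abs_of_nonneg (by positivity : (0:ℝ) ≤ ((α : ℕ) + 1 : ℝ))]
      exact mul_le_mul_of_nonneg_right hα (abs_nonneg ε)
    refine ⟨hUnit _ habs, ?_⟩
    rw [← hsub]
    exact hUnit _ (by rwa [abs_neg])
  · have ha1 : |(1:ℝ) * ε| ≤ 3 * |ε| := by
      rw [abs_mul, abs_one, one_mul]; linarith [abs_nonneg ε]
    have ha2 : |(2:ℝ) * ε| ≤ 3 * |ε| := by
      rw [abs_mul, show |(2:ℝ)| = 2 by norm_num]; linarith [abs_nonneg ε]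
    have ha3 : |(3:ℝ) * ε| ≤ 3 * |ε| := by
      rw [abs_mul, show |(3:ℝ)| = 3 by norm_num]
    have ha1' : |(-((1:ℝ) * ε))| ≤ 3 * |ε| := by rwa [abs_neg]
    have ha2' : |(-((2:ℝ) * ε))| ≤ 3 * |ε| := by rwa [abs_neg]
    have ha3' : |(-((3:ℝ) * ε))| ≤ 3 * |ε| := by rwa [abs_neg]
    have e1p := expand A D hA ((1:ℝ) * ε) (hUnit _ ha1)
    have e1m := expand A D hA (-((1:ℝ) * ε)) (hUnit _ ha1')
    have e2p := expand A D hA ((2:ℝ) * ε) (hUnit _ ha2)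
    have e2m := expand A D hA (-((2:ℝ) * ε)) (hUnit _ ha2')
    have e3p := expand A D hA ((3:ℝ) * ε) (hUnit _ ha3)
    have e3m := expand A D hA (-((3:ℝ) * ε)) (hUnit _ ha3')
    have key := combo A⁻¹ B ε _ _ _ _ _ _ e1p e1m e2p e2m e3p e3m
    have hvec : mulVecE A⁻¹ b
          - ((3 / 2 : ℝ) • xhat A D b ε 1 - (3 / 5 : ℝ) • xhat A D b ε 2
              + (1 / 10 : ℝ) • xhat A D b ε 3)
        = mulVecE (A⁻¹ - ((3/2:ℝ) • ((1/2:ℝ) • ((A + ((1:ℝ)*ε) • D)⁻¹ + (A + (-((1:ℝ)*ε)) • D)⁻¹))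
            - (3/5:ℝ) • ((1/2:ℝ) • ((A + ((2:ℝ)*ε) • D)⁻¹ + (A + (-((2:ℝ)*ε)) • D)⁻¹))
            + (1/10:ℝ) • ((1/2:ℝ) • ((A + ((3:ℝ)*ε) • D)⁻¹ + (A + (-((3:ℝ)*ε)) • D)⁻¹)))) b := by
      simp only [xhat, hsub, mulVecE_sub, mulVecE_add, mulVecE_smul]
    have hε6 : (0:ℝ) ≤ ε ^ 6 := by positivity
    have hterm : ∀ (c t : ℝ), |t| ≤ 3 * |ε| →
        ‖c • (B ^ 6 * (A + t • D)⁻¹)‖ ≤ |c| * (‖B ^ 6‖ * (2 * ‖A⁻¹‖)) := by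
      intro c t ht
      rw [norm_smul, Real.norm_eq_abs]
      exact mul_le_mul_of_nonneg_left
        ((Matrix.l2_opNorm_mul _ _).trans
          (mul_le_mul_of_nonneg_left (hInvB t ht) (norm_nonneg _))) (abs_nonneg c)
    have t1 := hterm (-(3/4)*ε^6) _ ha1
    have t2 := hterm (-(3/4)*ε^6) _ ha1'
    have t3 := hterm ((96/5)*ε^6) _ ha2
    have t4 := hterm ((96/5)*ε^6) _ ha2'
    have t5 := hterm (-(729/20)*ε^6) _ ha3
    have t6 := hterm (-(729/20)*ε^6) _ ha3'
    rw [show |(-(3/4)*ε^6 : ℝ)| = 3/4*ε^6 by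
      rw [abs_mul]; norm_num [abs_of_nonneg hε6]] at t1 t2
    rw [show |((96/5)*ε^6 : ℝ)| = 96/5*ε^6 by
      rw [abs_mul]; norm_num [abs_of_nonneg hε6]] at t3 t4
    rw [show |(-(729/20)*ε^6 : ℝ)| = 729/20*ε^6 by
      rw [abs_mul]; norm_num [abs_of_nonneg hε6]] at t5 t6
    rw [hvec]
    refine le_trans (norm_mulVecE_le _ _) ?_
    rw [hb, mul_one, key]
    refine le_trans (norm_add₆_le _ _ _ _ _ _) ?_
    nlinarith [mul_nonneg hε6 hK0]
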